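/- Let f : [a,b] → ℝ (with a < b) be a function of bounded variation on [a,b] and let p ≥ 1. Then ‖f‖_{[a,b],p} ≤ (b−a)^{1/p − 1}·|∫_a^b f(t) dt| + (1/2)·(b−a)^{1/p}·(2^{p+1} − 1)^{1/p}·(p+1)^{−1/p}·V_a^b(f), where ‖f‖_{[a,b],p} = (∫_a^b |f(t)|^p dt)^{1/p} and V_a^b(f) is the total variation of f on [a,b]. -/

import Mathlib

open MeasureTheory Set

section PNormAux
open intervalIntegral

lemma maxpow_cont (a b p : ℝ) (hp : 0 < p) :
    Continuous (fun t : ℝ => max (t - a) (b - t) ^ p) := by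
  apply Continuous.rpow_const (by continuity)
  intro x; right; exact hp.le

lemma integral_max_rpow (a b : ℝ) (hab : a < b) (p : ℝ) (hp : 0 < p) :
    ∫ t in a..b, max (t - a) (b - t) ^ p
      = (b - a) ^ (p + 1) * (2 ^ (p + 1) - 1) / (2 ^ p * (p + 1)) := by
  set c := (a + b) / 2 with hc
  have hac : a ≤ c := by simp [hc]; linarith
  have hcb : c ≤ b := by simp [hc]; linarith
  have hii : ∀ u v : ℝ, IntervalIntegrable (fun t => max (t - a) (b - t) ^ p) volume u v :=
    fun u v => (maxpow_cont a b p hp).intervalIntegrable u v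
  have hsplit := integral_add_adjacent_intervals (hii a c) (hii c b)
  have h1 : ∫ t in a..c, max (t - a) (b - t) ^ p = ∫ t in a..c, (b - t) ^ p := by
    apply integral_congr
    intro t ht
    rw [uIcc_of_le hac] at ht
    have : t - a ≤ b - t := by have := ht.2; simp [hc] at this; linarith
    dsimp only
    rw [max_eq_right this]
  have h2 : ∫ t in c..b, max (t - a) (b - t) ^ p = ∫ t in c..b, (t - a) ^ p := by
    apply integral_congr
    intro t ht
    rw [uIcc_of_le hcb] at ht
    have : b - t ≤ t - a := by have := ht.1; simp [hc] at this; linarith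
    dsimp only
    rw [max_eq_left this]
  have e1 : ∫ t in a..c, (b - t) ^ p = ∫ x in (b - c)..(b - a), x ^ p := by
    simpa using integral_comp_sub_left (fun u : ℝ => u ^ p) b (a := a) (b := c)
  have e2 : ∫ t in c..b, (t - a) ^ p = ∫ x in (c - a)..(b - a), x ^ p := by
    simpa using integral_comp_sub_right (fun u : ℝ => u ^ p) a (a := c) (b := b)
  have hbc : b - c = (b - a) / 2 := by simp [hc]; ring
  have hca : c - a = (b - a) / 2 := by simp [hc]; ring
  have hrp : ∀ u v : ℝ, ∫ x in u..v, x ^ p = (v ^ (p+1) - u ^ (p+1)) / (p+1) :=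
    fun u v => integral_rpow (Or.inl (by linarith))
  rw [← hsplit, h1, h2, e1, e2, hbc, hca, hrp]
  have hba : (0:ℝ) < b - a := by linarith
  have hhalf : ((b - a) / 2) ^ (p + 1) = (b - a) ^ (p + 1) / 2 ^ (p + 1) :=
    Real.div_rpow hba.le (by norm_num : (0:ℝ) ≤ 2) _
  have h2p1 : (2:ℝ) ^ (p + 1) = 2 ^ p * 2 := by
    rw [Real.rpow_add (by norm_num), Real.rpow_one]
  have hp1 : (0:ℝ) < p + 1 := by linarith
  have h2p : (0:ℝ) < 2 ^ p := Real.rpow_pos_of_pos (by norm_num) p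
  rw [hhalf, h2p1]
  field_simp
  ring

lemma bv_integrableOn {a b : ℝ} (f : ℝ → ℝ) (hf : BoundedVariationOn f (Icc a b)) :
    IntegrableOn f (Icc a b) volume := by
  obtain ⟨P, Q, hP, hQ, hPQ⟩ :=
    hf.locallyBoundedVariationOn.exists_monotoneOn_sub_monotoneOn
  have hPi : IntegrableOn P (Icc a b) volume := hP.integrableOn_isCompact isCompact_Icc
  have hQi : IntegrableOn Q (Icc a b) volume := hQ.integrableOn_isCompact isCompact_Icc
  rw [hPQ]; exact hPi.sub hQi

lemma bv_intervalIntegrable {a b : ℝ} (f : ℝ → ℝ) (hf : BoundedVariationOn f (Icc a b))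
    {u v : ℝ} (hu : u ∈ Icc a b) (hv : v ∈ Icc a b) :
    IntervalIntegrable f volume u v := by
  constructor <;>
  · apply (bv_integrableOn f hf).mono_set
    rintro x ⟨h1, h2⟩
    constructor
    · calc a ≤ _ := by first | exact hu.1 | exact hv.1
        _ ≤ x := h1.le
    · calc x ≤ _ := h2
        _ ≤ b := by first | exact hv.2 | exact hu.2

lemma pointwise_bound {a b : ℝ} (hab : a < b) (f : ℝ → ℝ)
    (hf : BoundedVariationOn f (Icc a b)) {t : ℝ} (ht : t ∈ Icc a b) :
    |f t - (∫ s in a..b, f s) / (b - a)| ≤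
      (eVariationOn f (Icc a b)).toReal * max (t - a) (b - t) / (b - a) := by
  have hba : (0:ℝ) < b - a := by linarith
  have hmemA : a ∈ Icc a b := ⟨le_rfl, hab.le⟩
  have hmemB : b ∈ Icc a b := ⟨hab.le, le_rfl⟩
  set Vat := (eVariationOn f (Icc a t)).toReal with hVat
  set Vtb := (eVariationOn f (Icc t b)).toReal with hVtb
  set V := (eVariationOn f (Icc a b)).toReal with hV
  have hsub1 : Icc a t ⊆ Icc a b := Icc_subset_Icc le_rfl ht.2
  have hsub2 : Icc t b ⊆ Icc a b := Icc_subset_Icc ht.1 le_rfl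
  have hfin : eVariationOn f (Icc a b) ≠ ⊤ := hf
  have hfin1 : eVariationOn f (Icc a t) ≠ ⊤ :=
    (lt_of_le_of_lt (eVariationOn.mono f hsub1) hfin.lt_top).ne
  have hfin2 : eVariationOn f (Icc t b) ≠ ⊤ :=
    (lt_of_le_of_lt (eVariationOn.mono f hsub2) hfin.lt_top).ne
  have hVsum : Vat + Vtb = V := by
    have hadd := eVariationOn.Icc_add_Icc f (s := univ) ht.1 ht.2 (mem_univ t)
    simp only [univ_inter] at hadd
    rw [hVat, hVtb, hV, ← hadd, ENNReal.toReal_add hfin1 hfin2]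
  have hVat0 : 0 ≤ Vat := ENNReal.toReal_nonneg
  have hVtb0 : 0 ≤ Vtb := ENNReal.toReal_nonneg
  have bound1 : ∀ s ∈ Icc a t, |f t - f s| ≤ Vat := fun s hs => by
    rw [← Real.dist_eq]
    exact (hf.mono hsub1).dist_le ⟨ht.1, le_rfl⟩ hs
  have bound2 : ∀ s ∈ Icc t b, |f t - f s| ≤ Vtb := fun s hs => by
    rw [← Real.dist_eq]
    exact (hf.mono hsub2).dist_le ⟨le_rfl, ht.2⟩ hs
  have hint : ∀ u v, u ∈ Icc a b → v ∈ Icc a b →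
      IntervalIntegrable (fun s => |f t - f s|) volume u v :=
    fun u v hu hv => ((intervalIntegrable_const.sub (bv_intervalIntegrable f hf hu hv)).abs)
  have key : (b - a) * |f t - (∫ s in a..b, f s) / (b - a)| ≤ (t-a) * Vat + (b-t) * Vtb := by
    have eX : (b - a) * (f t - (∫ s in a..b, f s) / (b - a))
        = (b - a) * f t - ∫ s in a..b, f s := by
      field_simp
    have e0 : (b - a) * |f t - (∫ s in a..b, f s) / (b - a)|
        = |(b - a) * f t - ∫ s in a..b, f s| := by
      rw [← eX, abs_mul, abs_of_pos hba]
    have e1 : (b - a) * f t - (∫ s in a..b, f s) = ∫ s in a..b, (f t - f s) := by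
      rw [intervalIntegral.integral_sub intervalIntegrable_const (bv_intervalIntegrable f hf hmemA hmemB),
        intervalIntegral.integral_const, smul_eq_mul, mul_comm]
    rw [e0, e1]
    calc |∫ s in a..b, (f t - f s)| ≤ ∫ s in a..b, |f t - f s| :=
          abs_integral_le_integral_abs hab.le
      _ = (∫ s in a..t, |f t - f s|) + ∫ s in t..b, |f t - f s| :=
          (integral_add_adjacent_intervals (hint a t hmemA ht) (hint t b ht hmemB)).symm
      _ ≤ (t - a) * Vat + (b - t) * Vtb := by
          gcongr
          · calc (∫ s in a..t, |f t - f s|) ≤ ∫ _ in a..t, Vat :=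
                  integral_mono_on ht.1 (hint a t hmemA ht) intervalIntegrable_const bound1
              _ = (t - a) * Vat := by rw [intervalIntegral.integral_const, smul_eq_mul]
          · calc (∫ s in t..b, |f t - f s|) ≤ ∫ _ in t..b, Vtb :=
                  integral_mono_on ht.2 (hint t b ht hmemB) intervalIntegrable_const bound2
              _ = (b - t) * Vtb := by rw [intervalIntegral.integral_const, smul_eq_mul]
  have hmax : (t-a) * Vat + (b-t) * Vtb ≤ max (t-a) (b-t) * (Vat + Vtb) := by
    have h1 : t - a ≤ max (t-a) (b-t) := le_max_left _ _
    have h2 : b - t ≤ max (t-a) (b-t) := le_max_right _ _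
    nlinarith
  rw [le_div_iff₀ hba]
  calc |f t - (∫ s in a..b, f s) / (b - a)| * (b - a)
      = (b - a) * |f t - (∫ s in a..b, f s) / (b - a)| := by ring
    _ ≤ (t-a) * Vat + (b-t) * Vtb := key
    _ ≤ max (t-a) (b-t) * (Vat + Vtb) := hmax
    _ = V * max (t-a) (b-t) := by rw [hVsum]; ring
end PNormAux

open intervalIntegral in
/-- **Theorem 2.** If `f : [a,b] → ℝ` is of bounded variation on `[a,b]` (`a < b`) and `p ≥ 1`,
then `‖f‖_{[a,b],p} ≤ (b-a)^{1/p-1} |∫_a^b f| +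
(1/2) (b-a)^{1/p} (2^{p+1}-1)^{1/p} (p+1)^{-1/p} ⋁_a^b (f)`. -/
theorem p_norm_le_integral_mean_add_variation
    (a b : ℝ) (hab : a < b) (p : ℝ) (hp : 1 ≤ p) (f : ℝ → ℝ)
    (hf : BoundedVariationOn f (Icc a b)) :
    (∫ t in a..b, |f t| ^ p) ^ p⁻¹ ≤
      (b - a) ^ (p⁻¹ - 1) * |∫ t in a..b, f t| +
        (1 / 2) * ((b - a) ^ p⁻¹ * (2 ^ (p + 1) - 1) ^ p⁻¹ * (p + 1) ^ (-p⁻¹)) *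
          (eVariationOn f (Icc a b)).toReal := by
  have hba : (0:ℝ) < b - a := sub_pos.mpr hab
  have hp0 : (0:ℝ) < p := lt_of_lt_of_le one_pos hp
  have hp0' : (0:ℝ) < p⁻¹ := by positivity
  have hpinv : p * (1/p) = 1 := mul_one_div_cancel hp0.ne'
  set V := (eVariationOn f (Icc a b)).toReal with hV
  have hV0 : 0 ≤ V := ENNReal.toReal_nonneg
  set I := ∫ t in a..b, f t with hI
  set m := I / (b - a) with hm
  set W : ℝ → ℝ := fun t => V * max (t - a) (b - t) / (b - a) with hWdef
  have hmax0 : ∀ t : ℝ, 0 ≤ max (t - a) (b - t) := by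
    intro t
    rcases le_or_gt t a with h | h
    · exact le_max_of_le_right (by linarith)
    · exact le_max_of_le_left (by linarith)
  have hW0 : ∀ t, 0 ≤ W t := fun t => by
    have := hmax0 t; positivity
  have hWcont : Continuous W := by
    apply Continuous.div_const
    exact continuous_const.mul ((continuous_id.sub continuous_const).max
      (continuous_const.sub continuous_id))
  have h21 : (0:ℝ) ≤ 2 ^ (p+1) - 1 := by
    have := Real.one_le_rpow (by norm_num : (1:ℝ) ≤ 2) (by linarith : (0:ℝ) ≤ p + 1)
    linarith
  -- pointwise bound
  have hptw : ∀ t ∈ Icc a b, |f t| ≤ |m| + W t := by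
    intro t ht
    have h1 := pointwise_bound hab f hf ht
    have h2 : |f t| ≤ |m| + |f t - m| := by
      calc |f t| = |m + (f t - m)| := by ring_nf
        _ ≤ |m| + |f t - m| := abs_add_le _ _
    exact h2.trans (by simp only [hWdef]; linarith)
  -- measurability
  have hfae : AEMeasurable f (volume.restrict (Ioc a b)) := by
    obtain ⟨P, Q, hP, hQ, hPQ⟩ :=
      hf.locallyBoundedVariationOn.exists_monotoneOn_sub_monotoneOn
    have hPm : AEMeasurable P (volume.restrict (Ioc a b)) :=
      aemeasurable_restrict_of_monotoneOn measurableSet_Ioc (hP.mono Ioc_subset_Icc_self)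
    have hQm : AEMeasurable Q (volume.restrict (Ioc a b)) :=
      aemeasurable_restrict_of_monotoneOn measurableSet_Ioc (hQ.mono Ioc_subset_Icc_self)
    rw [hPQ]; exact hPm.sub hQm
  have habsp_meas : AEMeasurable (fun t => |f t| ^ p) (volume.restrict (Ioc a b)) := by
    have hc : Continuous (fun x : ℝ => |x| ^ p) :=
      continuous_abs.rpow_const fun x => Or.inr hp0.le
    exact hc.measurable.comp_aemeasurable hfae
  -- integrability of |f|^p
  have hMb : ∀ t ∈ Icc a b, |f t| ≤ |f a| + V := by
    intro t ht
    have h : |f t - f a| ≤ V := by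
      rw [← Real.dist_eq]; exact hf.dist_le ht ⟨le_rfl, hab.le⟩
    calc |f t| = |f a + (f t - f a)| := by ring_nf
      _ ≤ |f a| + |f t - f a| := abs_add_le _ _
      _ ≤ |f a| + V := by linarith
  have hintp : IntegrableOn (fun t => |f t| ^ p) (Ioc a b) volume := by
    apply Integrable.mono' (g := fun _ => (|f a| + V) ^ p)
    · exact integrableOn_const measure_Ioc_lt_top.ne
    · exact habsp_meas.aestronglyMeasurable
    · refine (ae_restrict_iff' measurableSet_Ioc).mpr (ae_of_all _ fun t ht => ?_)
      rw [Real.norm_eq_abs, abs_of_nonneg (Real.rpow_nonneg (abs_nonneg _) p)]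
      exact Real.rpow_le_rpow (abs_nonneg _) (hMb t (Ioc_subset_Icc_self ht)) hp0.le
  -- lintegral quantities
  set G : ℝ → ENNReal := fun _ => ENNReal.ofReal |m| with hGdef
  set H : ℝ → ENNReal := fun t => ENNReal.ofReal (W t) with hHdef
  set A := ∫⁻ t in Ioc a b, (ENNReal.ofReal |f t|) ^ p with hA
  set B := ∫⁻ t in Ioc a b, (G t) ^ p with hB
  set C := ∫⁻ t in Ioc a b, (H t) ^ p with hC
  have hHmeas : AEMeasurable H (volume.restrict (Ioc a b)) :=
    (hWcont.measurable.ennreal_ofReal).aemeasurable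
  have h_main : A ^ (1/p) ≤ B ^ (1/p) + C ^ (1/p) := by
    have hmono : A ≤ ∫⁻ t in Ioc a b, ((G + H) t) ^ p := by
      apply lintegral_mono_ae
      refine (ae_restrict_iff' measurableSet_Ioc).mpr (ae_of_all _ fun t ht => ?_)
      apply ENNReal.rpow_le_rpow _ hp0.le
      simp only [Pi.add_apply, hGdef, hHdef]
      rw [← ENNReal.ofReal_add (abs_nonneg _) (hW0 t)]
      exact ENNReal.ofReal_le_ofReal (hptw t (Ioc_subset_Icc_self ht))
    calc A ^ (1/p) ≤ (∫⁻ t in Ioc a b, ((G + H) t) ^ p) ^ (1/p) :=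
        ENNReal.rpow_le_rpow hmono (by positivity)
      _ ≤ B ^ (1/p) + C ^ (1/p) :=
        ENNReal.lintegral_Lp_add_le aemeasurable_const hHmeas hp
  -- identify A
  have hIp : ∫ t in a..b, |f t| ^ p = ∫ t in Ioc a b, |f t| ^ p :=
    integral_of_le hab.le
  have hIp0 : 0 ≤ ∫ t in Ioc a b, |f t| ^ p :=
    setIntegral_nonneg measurableSet_Ioc fun t _ => Real.rpow_nonneg (abs_nonneg _) p
  have hAeq : ENNReal.ofReal (∫ t in Ioc a b, |f t| ^ p) = A := by
    rw [ofReal_integral_eq_lintegral_ofReal hintp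
      (ae_of_all _ fun t => Real.rpow_nonneg (abs_nonneg _) p)]
    exact lintegral_congr fun t =>
      (ENNReal.ofReal_rpow_of_nonneg (abs_nonneg _) hp0.le).symm
  have hLHS : (∫ t in a..b, |f t| ^ p) ^ p⁻¹ = (A ^ (1/p)).toReal := by
    rw [hIp, ← ENNReal.toReal_ofReal hIp0, hAeq, one_div, ENNReal.toReal_rpow]
  -- identify B
  have hBeq : B ^ (1/p) = ENNReal.ofReal (|m| * (b - a) ^ p⁻¹) := by
    rw [hB, hGdef]
    rw [setLIntegral_const, Real.volume_Ioc,
      ENNReal.mul_rpow_of_nonneg _ _ (by positivity),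
      ← ENNReal.rpow_mul, hpinv, ENNReal.rpow_one,
      ENNReal.ofReal_rpow_of_nonneg hba.le (by positivity),
      ← ENNReal.ofReal_mul (abs_nonneg _), one_div]
  -- identify C
  set K := (V/(b-a))^p * ((b-a)^(p+1) * (2^(p+1)-1) / (2^p*(p+1))) with hKdef
  have hK0 : 0 ≤ K := by
    have h1 : (0:ℝ) ≤ (V/(b-a))^p := Real.rpow_nonneg (by positivity) p
    have h2 : (0:ℝ) < (b-a)^(p+1) := Real.rpow_pos_of_pos hba _
    have h3 : (0:ℝ) < 2^p := Real.rpow_pos_of_pos (by norm_num) p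
    have h4 : (0:ℝ) < p + 1 := by linarith
    positivity
  have hWpow : ∀ t, W t ^ p = (V/(b-a))^p * max (t-a) (b-t) ^ p := by
    intro t
    have e : W t = (V/(b-a)) * max (t-a) (b-t) := by
      simp only [hWdef]; ring
    rw [e, Real.mul_rpow (by positivity) (hmax0 t)]
  have hWp_cont : Continuous (fun t => W t ^ p) :=
    hWcont.rpow_const fun x => Or.inr hp0.le
  have hWint : IntegrableOn (fun t => W t ^ p) (Ioc a b) volume :=
    hWp_cont.integrableOn_Ioc
  have hKint : ∫ t in Ioc a b, W t ^ p = K := by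
    rw [← integral_of_le hab.le]
    calc ∫ t in a..b, W t ^ p
        = ∫ t in a..b, (V/(b-a))^p * max (t-a) (b-t) ^ p := by
          exact integral_congr fun t _ => hWpow t
      _ = (V/(b-a))^p * ∫ t in a..b, max (t-a) (b-t) ^ p := by
          rw [intervalIntegral.integral_const_mul]
      _ = K := by rw [integral_max_rpow a b hab p hp0, hKdef]
  have hCeq : C ^ (1/p) = ENNReal.ofReal (K ^ (1/p)) := by
    have h1 : ENNReal.ofReal K = C := by
      rw [← hKint, ofReal_integral_eq_lintegral_ofReal hWint
        (ae_of_all _ fun t => Real.rpow_nonneg (hW0 t) p)]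
      exact lintegral_congr fun t =>
        (ENNReal.ofReal_rpow_of_nonneg (hW0 t) hp0.le).symm
    rw [← h1, ENNReal.ofReal_rpow_of_nonneg hK0 (by positivity)]
  -- combine
  have hfinal : (A ^ (1/p)).toReal ≤ |m| * (b-a)^p⁻¹ + K^(1/p) := by
    apply ENNReal.toReal_le_of_le_ofReal
    · have : 0 ≤ K ^ (1/p) := Real.rpow_nonneg hK0 _
      positivity
    · refine h_main.trans_eq ?_
      rw [hBeq, hCeq, ← ENNReal.ofReal_add (by positivity) (Real.rpow_nonneg hK0 _)]
  rw [hLHS]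
  refine hfinal.trans (le_of_eq ?_)
  -- final algebra
  have hterm1 : |m| * (b-a)^p⁻¹ = (b-a)^(p⁻¹-1) * |I| := by
    rw [hm, abs_div, abs_of_pos hba, Real.rpow_sub hba, Real.rpow_one]
    ring
  have hKsimp : K = V^p * ((b-a) * ((2^(p+1)-1) * ((2^p)⁻¹ * (p+1)⁻¹))) := by
    rw [hKdef, Real.div_rpow hV0 hba.le, Real.rpow_add hba, Real.rpow_one]
    have h1 : (b-a)^p ≠ 0 := (Real.rpow_pos_of_pos hba p).ne'
    have h2 : (2:ℝ)^p ≠ 0 := (Real.rpow_pos_of_pos (by norm_num) p).ne'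
    have h3 : (p+1:ℝ) ≠ 0 := by positivity
    field_simp
  have hterm2 : K^(1/p)
      = (1/2) * ((b-a)^p⁻¹ * (2^(p+1)-1)^p⁻¹ * (p+1)^(-p⁻¹)) * V := by
    have h2p : (0:ℝ) ≤ (2:ℝ)^p := (Real.rpow_pos_of_pos (by norm_num) p).le
    have hp1 : (0:ℝ) ≤ p + 1 := by linarith
    rw [hKsimp,
      Real.mul_rpow (Real.rpow_nonneg hV0 p) (by positivity),
      Real.mul_rpow hba.le (by positivity),
      Real.mul_rpow h21 (by positivity),
      Real.mul_rpow (by positivity) (by positivity),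
      ← Real.rpow_mul hV0, hpinv, Real.rpow_one,
      Real.inv_rpow h2p, ← Real.rpow_mul (by norm_num : (0:ℝ) ≤ 2), hpinv,
      Real.rpow_one,
      Real.inv_rpow hp1, ← Real.rpow_neg hp1, one_div]
    ring
  rw [hterm1, hterm2]
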